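/- For a = ((g₁g₂+1), i(g₁g₂−1), (g₁+g₂), i(g₁−g₂)) with g₁, g₂ holomorphic, one has ‖a‖²‖a'‖² − |ā·a'|² = −4(|g₁'|²(|g₂|²−1)² + |g₂'|²(|g₁|²−1)²). -/

import Mathlib

open Complex

/-- Indefinite Hermitian product a·b̄ on ℂ⁴. -/
noncomputable def hdot (x y : Fin 4 → ℂ) : ℂ :=
  x 0 * star (y 0) + x 1 * star (y 1) - x 2 * star (y 2) - x 3 * star (y 3)

/-- Indefinite Hermitian square ‖a‖² = |a₁|²+|a₂|²−|a₃|²−|a₄|². -/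
noncomputable def nsq (x : Fin 4 → ℂ) : ℝ :=
  Complex.normSq (x 0) + Complex.normSq (x 1) - Complex.normSq (x 2) - Complex.normSq (x 3)

/-- Auxiliary vector a = ((g₁g₂+1), i(g₁g₂−1), (g₁+g₂), i(g₁−g₂)). -/
noncomputable def aV (g₁ g₂ : ℂ → ℂ) (t : ℂ) : Fin 4 → ℂ :=
  ![g₁ t * g₂ t + 1, Complex.I * (g₁ t * g₂ t - 1),
    g₁ t + g₂ t, Complex.I * (g₁ t - g₂ t)]

lemma key (a b a' b' : ℂ) :
    nsq ![a*b+1, Complex.I*(a*b-1), a+b, Complex.I*(a-b)]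
      * nsq ![a'*b+a*b', Complex.I*(a'*b+a*b'), a'+b', Complex.I*(a'-b')]
      - Complex.normSq (hdot ![a'*b+a*b', Complex.I*(a'*b+a*b'), a'+b', Complex.I*(a'-b')]
          ![a*b+1, Complex.I*(a*b-1), a+b, Complex.I*(a-b)])
    = -4 * (Complex.normSq a' * (Complex.normSq b - 1)^2
            + Complex.normSq b' * (Complex.normSq a - 1)^2) := by
  simp only [nsq, hdot, Matrix.cons_val_zero, Matrix.cons_val_one, Matrix.head_cons,
    Matrix.cons_val_two, Matrix.tail_cons, Matrix.cons_val_three, Complex.normSq_apply,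
    Complex.add_re, Complex.add_im, Complex.sub_re, Complex.sub_im, Complex.mul_re,
    Complex.mul_im, Complex.I_re, Complex.I_im, Complex.one_re, Complex.one_im,
    RCLike.star_def, Complex.conj_re, Complex.conj_im]
  ring


/-- ‖a‖²‖a'‖² − |ā·a'|² = −4(|g₁'|²(|g₂|²−1)² + |g₂'|²(|g₁|²−1)²). -/
theorem stmt12 (D : Set ℂ) (hD : IsOpen D) (g₁ g₂ : ℂ → ℂ)
    (hg₁ : DifferentiableOn ℂ g₁ D) (hg₂ : DifferentiableOn ℂ g₂ D) :
    ∀ t ∈ D,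
      nsq (aV g₁ g₂ t) * nsq (fun k => deriv (fun z => aV g₁ g₂ z k) t)
        - Complex.normSq (hdot (fun k => deriv (fun z => aV g₁ g₂ z k) t) (aV g₁ g₂ t))
      = -4 * (Complex.normSq (deriv g₁ t) * (Complex.normSq (g₂ t) - 1)^2
              + Complex.normSq (deriv g₂ t) * (Complex.normSq (g₁ t) - 1)^2) := by
  intro t ht
  have h1 : DifferentiableAt ℂ g₁ t := (hg₁ t ht).differentiableAt (hD.mem_nhds ht)
  have h2 : DifferentiableAt ℂ g₂ t := (hg₂ t ht).differentiableAt (hD.mem_nhds ht)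
  have hd : (fun k => deriv (fun z => aV g₁ g₂ z k) t)
      = ![deriv g₁ t * g₂ t + g₁ t * deriv g₂ t,
          Complex.I * (deriv g₁ t * g₂ t + g₁ t * deriv g₂ t),
          deriv g₁ t + deriv g₂ t,
          Complex.I * (deriv g₁ t - deriv g₂ t)] := by
    funext k
    fin_cases k
    · show deriv (fun z => aV g₁ g₂ z 0) t = _
      have : (fun z => aV g₁ g₂ z 0) = fun z => g₁ z * g₂ z + 1 := by
        funext z; simp [aV]
      rw [this, deriv_add_const, deriv_fun_mul h1 h2]; simp
    · show deriv (fun z => aV g₁ g₂ z 1) t = _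
      have : (fun z => aV g₁ g₂ z 1) = fun z => Complex.I * (g₁ z * g₂ z - 1) := by
        funext z; simp [aV]
      rw [this, deriv_const_mul (d := fun z => g₁ z * g₂ z - 1) _ (((h1.mul h2).sub_const 1)), deriv_sub_const,
        deriv_fun_mul h1 h2]; simp
    · show deriv (fun z => aV g₁ g₂ z 2) t = _
      have : (fun z => aV g₁ g₂ z 2) = fun z => g₁ z + g₂ z := by
        funext z; simp [aV]
      rw [this, deriv_fun_add h1 h2]
      rfl
    · show deriv (fun z => aV g₁ g₂ z 3) t = _
      have : (fun z => aV g₁ g₂ z 3) = fun z => Complex.I * (g₁ z - g₂ z) := by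
        funext z; simp [aV]
      rw [this, deriv_const_mul (d := fun z => g₁ z - g₂ z) _ (h1.sub h2), deriv_fun_sub h1 h2]
      rfl
  rw [hd, aV]
  exact key (g₁ t) (g₂ t) (deriv g₁ t) (deriv g₂ t)
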